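/- (Extreme-world characterization for the MM algorithm.) Assume binary labels 𝒴 = {0,1}, 1 ≤ K ≤ N with K odd, and all N·M similarity values s_{i,j} pairwise distinct. For every label l ∈ 𝒴, the K-NN prediction of the l-extreme world E_l is l if and only if there exists a possible world whose K-NN prediction is l. -/

import Mathlib

open Finset

/-- The top-`K` set of a possible world `w`: the set of indices `i` such that at most `K`
indices `i'` have similarity `s i' (w i')` at least `s i (w i)`. Under the assumption that
all similarities are pairwise distinct, this is the set of the `K` indices with the largest
similarities. -/
noncomputable def topK {N M : ℕ} (s : Fin N → Fin M → ℝ) (K : ℕ) (w : Fin N → Fin M) :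
    Finset (Fin N) :=
  Finset.univ.filter fun i =>
    (Finset.univ.filter fun i' => s i (w i) ≤ s i' (w i')).card ≤ K

/-- For binary labels and odd `K`, the K-NN prediction of `w` is `l` iff `l` is the strict
majority label among the top-`K` set of `w`. -/
def predicts {N M : ℕ} {Y : Type*} [DecidableEq Y]
    (s : Fin N → Fin M → ℝ) (K : ℕ) (y : Fin N → Y) (w : Fin N → Fin M) (l : Y) : Prop :=
  K < 2 * ((topK s K w).filter fun i => y i = l).card

/-- `e` is the `l`-extreme world: for each `i`, `e i` is the candidate most similar to
the test point if `y i = l`, and the candidate least similar to the test point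
otherwise. -/
def IsExtremeWorld {N M : ℕ} {Y : Type*} (s : Fin N → Fin M → ℝ) (y : Fin N → Y) (l : Y)
    (e : Fin N → Fin M) : Prop :=
  ∀ i : Fin N,
    (y i = l → ∀ j : Fin M, s i j ≤ s i (e i)) ∧ (y i ≠ l → ∀ j : Fin M, s i (e i) ≤ s i j)

lemma rank_lt_rank {N : ℕ} (t : Fin N → ℝ) (A : Finset (Fin N)) {i j : Fin N}
    (hi : i ∈ A) (h : t i < t j) :
    (A.filter fun i' => t j ≤ t i').card < (A.filter fun i' => t i ≤ t i').card := by
  refine Finset.card_lt_card ⟨?_, ?_⟩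
  · exact Finset.monotone_filter_right _ (fun x _ hx => le_trans h.le hx)
  · intro hsub
    have := hsub (Finset.mem_filter.mpr ⟨hi, le_refl _⟩)
    rw [Finset.mem_filter] at this
    exact absurd this.2 (not_le.mpr h)

lemma rank_injOn {N : ℕ} (t : Fin N → ℝ) (ht : Function.Injective t) (A : Finset (Fin N)) :
    Set.InjOn (fun i => (A.filter fun i' => t i ≤ t i').card) A := by
  intro i hi j hj hij
  rcases lt_trichotomy (t i) (t j) with h | h | h
  · exact absurd hij.symm (Nat.ne_of_lt (rank_lt_rank t A hi h))
  · exact ht h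
  · exact absurd hij (Nat.ne_of_lt (rank_lt_rank t A hj h))

lemma top_filter_card {N : ℕ} (t : Fin N → ℝ) (ht : Function.Injective t)
    (A : Finset (Fin N)) (m : ℕ) :
    (A.filter fun i => (A.filter fun i' => t i ≤ t i').card ≤ m).card = min m A.card := by
  classical
  set ρ : Fin N → ℕ := fun i => (A.filter fun i' => t i ≤ t i').card with hρ
  have hinj := rank_injOn t ht A
  have himg : A.image ρ = Finset.Icc 1 A.card := by
    apply Finset.eq_of_subset_of_card_le
    · intro n hn
      rw [mem_image] at hn
      obtain ⟨i, hi, rfl⟩ := hn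
      rw [mem_Icc]
      constructor
      · exact Finset.card_pos.mpr ⟨i, by simp [hi]⟩
      · exact Finset.card_filter_le _ _
    · rw [Nat.card_Icc, Finset.card_image_of_injOn hinj]
      omega
  have h1 : (A.filter fun i => ρ i ≤ m).card = ((A.filter fun i => ρ i ≤ m).image ρ).card := by
    rw [Finset.card_image_of_injOn (hinj.mono (by intro x hx; exact mem_of_mem_filter x hx))]
  rw [h1]
  have h2 : (A.filter fun i => ρ i ≤ m).image ρ = (A.image ρ).filter (fun n => n ≤ m) := by
    rw [Finset.filter_image]
  rw [h2, himg]
  have h3 : (Finset.Icc 1 A.card).filter (fun n => n ≤ m) = Finset.Icc 1 (min m A.card) := by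
    ext n; simp only [mem_filter, mem_Icc]; omega
  rw [h3, Nat.card_Icc]
  omega

/-- **extreme-world characterization for the MM algorithm.** For binary
labels `𝒴 = {0,1}`, `1 ≤ K ≤ N` odd, and pairwise distinct similarities: the K-NN
prediction of the `l`-extreme world `E_l` is `l` iff there exists a possible world whose
K-NN prediction is `l`. -/
theorem stmt9 (N M K : ℕ) (hK1 : 1 ≤ K) (hKN : K ≤ N) (hKodd : Odd K)
    (y : Fin N → Fin 2)
    (s : Fin N → Fin M → ℝ)
    (hs : Function.Injective fun p : Fin N × Fin M => s p.1 p.2)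
    (l : Fin 2) (e : Fin N → Fin M) (he : IsExtremeWorld s y l e) :
    predicts s K y e l ↔ ∃ w : Fin N → Fin M, predicts s K y w l := by
  classical
  constructor
  · intro h; exact ⟨e, h⟩
  · rintro ⟨w, hw⟩
    set tw : Fin N → ℝ := fun i => s i (w i) with htw_def
    set te : Fin N → ℝ := fun i => s i (e i) with hte_def
    have hinj : ∀ v : Fin N → Fin M, Function.Injective fun i => s i (v i) := by
      intro v i j hij
      have := hs (a₁ := (i, v i)) (a₂ := (j, v j)) hij
      exact congrArg Prod.fst this
    have htwinj : Function.Injective tw := hinj w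
    have hteinj : Function.Injective te := hinj e
    set A : Finset (Fin N) := univ.filter fun i => y i = l with hA_def
    -- extreme world inequalities
    have hup : ∀ i ∈ A, tw i ≤ te i := by
      intro i hi
      exact (he i).1 (mem_filter.mp hi).2 (w i)
    have hdown : ∀ i : Fin N, i ∉ A → te i ≤ tw i := by
      intro i hi
      have : y i ≠ l := fun h => hi (mem_filter.mpr ⟨mem_univ i, h⟩)
      exact (he i).2 this (w i)
    set m : ℕ := ((topK s K w).filter fun i => y i = l).card with hm_def
    have hKm : K < 2 * m := hw
    have hFw : ((topK s K w).filter fun i => y i = l) =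
        A.filter (fun i => (univ.filter fun i' => tw i ≤ tw i').card ≤ K) := by
      unfold topK
      rw [Finset.filter_comm]
    have hmA : m ≤ A.card := by
      rw [hm_def, hFw]; exact Finset.card_filter_le _ _
    have hm1 : 1 ≤ m := by omega
    -- top-m of A under tw
    set Tw : Finset (Fin N) :=
      A.filter fun i => (A.filter fun i' => tw i ≤ tw i').card ≤ m with hTw_def
    have hTwcard : Tw.card = m := by
      rw [hTw_def, top_filter_card tw htwinj A m]; omega
    have hTwA : Tw ⊆ A := Finset.filter_subset _ _
    obtain ⟨i₀, hi₀T, hi₀min⟩ := Finset.exists_min_image Tw tw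
      (Finset.card_pos.mp (by omega))
    -- i₀ has global w-rank ≤ K
    have hrank_i₀ : (univ.filter fun i' => tw i₀ ≤ tw i').card ≤ K := by
      have hj : ∃ j ∈ (topK s K w).filter fun i => y i = l, tw j ≤ tw i₀ := by
        by_contra hc
        push_neg at hc
        have hnot : i₀ ∉ (topK s K w).filter fun i => y i = l := by
          intro h; exact absurd (le_refl _) (not_le.mpr (hc i₀ h))
        have hsub : insert i₀ ((topK s K w).filter fun i => y i = l) ⊆
            A.filter (fun i' => tw i₀ ≤ tw i') := by
          intro x hx
          rcases Finset.mem_insert.mp hx with rfl | hx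
          · exact mem_filter.mpr ⟨hTwA hi₀T, le_refl _⟩
          · refine mem_filter.mpr ⟨?_, (hc x hx).le⟩
            rw [hFw] at hx; exact mem_of_mem_filter x hx
        have hcard := Finset.card_le_card hsub
        rw [Finset.card_insert_of_notMem hnot] at hcard
        have hle := (mem_filter.mp hi₀T).2
        omega
      obtain ⟨j, hjF, hji⟩ := hj
      calc (univ.filter fun i' => tw i₀ ≤ tw i').card
          ≤ (univ.filter fun i' => tw j ≤ tw i').card :=
            Finset.card_le_card (Finset.monotone_filter_right _
              (fun x _ hx => le_trans hji hx))
        _ ≤ K := by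
            have := (mem_filter.mp hjF).1
            unfold topK at this
            exact (mem_filter.mp this).2
    -- at least m elements of A are ≥ tw i₀ (under tw)
    have hAcount : m ≤ (A.filter fun i' => tw i₀ ≤ tw i').card := by
      rw [← hTwcard]
      apply Finset.card_le_card
      intro x hx
      exact mem_filter.mpr ⟨hTwA hx, hi₀min x hx⟩
    -- hence few non-A elements are ≥ tw i₀
    have hB : ((univ.filter fun i' => tw i₀ ≤ tw i').filter fun i' => ¬ y i' = l).card
        ≤ K - m := by
      have hsplit : ((univ.filter fun i' => tw i₀ ≤ tw i').filter fun i' => y i' = l).card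
          + ((univ.filter fun i' => tw i₀ ≤ tw i').filter fun i' => ¬ y i' = l).card
          = (univ.filter fun i' => tw i₀ ≤ tw i').card :=
        Finset.card_filter_add_card_filter_not _
      have hApart : ((univ.filter fun i' => tw i₀ ≤ tw i').filter fun i' => y i' = l)
          = A.filter (fun i' => tw i₀ ≤ tw i') := Finset.filter_comm _ _ _
      rw [hApart] at hsplit
      omega
    -- top-m of A under te
    set Te : Finset (Fin N) :=
      A.filter fun i => (A.filter fun i' => te i ≤ te i').card ≤ m with hTe_def
    have hTecard : Te.card = m := by
      rw [hTe_def, top_filter_card te hteinj A m]; omega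
    have hTe_sub : Te ⊆ (topK s K e).filter fun i => y i = l := by
      intro i hiTe
      have hiA : i ∈ A := Finset.mem_of_mem_filter i hiTe
      have hyi : y i = l := (mem_filter.mp hiA).2
      -- te i ≥ tw i₀
      have h1 : tw i₀ ≤ te i := by
        by_contra hlt
        push_neg at hlt
        have hnot : i ∉ Tw := by
          intro h
          exact absurd (le_trans (hi₀min i h) (hup i hiA)) (not_le.mpr hlt)
        have hsub2 : insert i Tw ⊆ A.filter fun i' => te i ≤ te i' := by
          intro x hx
          rcases Finset.mem_insert.mp hx with rfl | hx
          · exact mem_filter.mpr ⟨hiA, le_refl _⟩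
          · refine mem_filter.mpr ⟨hTwA hx, ?_⟩
            exact le_trans hlt.le (le_trans (hi₀min x hx) (hup x (hTwA hx)))
        have hcard := Finset.card_le_card hsub2
        rw [Finset.card_insert_of_notMem hnot, hTwcard] at hcard
        have hle := (mem_filter.mp hiTe).2
        omega
      -- bound the global e-rank of i
      have hApart : ((univ.filter fun i' => te i ≤ te i').filter fun i' => y i' = l).card
          ≤ m := by
        rw [Finset.filter_comm]
        exact (mem_filter.mp hiTe).2
      have hBpart : ((univ.filter fun i' => te i ≤ te i').filter fun i' => ¬ y i' = l).card
          ≤ K - m := by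
        refine le_trans (Finset.card_le_card ?_) hB
        intro x hx
        rw [mem_filter, mem_filter] at hx
        have hxnA : x ∉ A := by
          intro h; exact hx.2 (mem_filter.mp h).2
        refine mem_filter.mpr ⟨mem_filter.mpr ⟨mem_univ x, ?_⟩, hx.2⟩
        exact le_trans h1 (le_trans hx.1.2 (hdown x hxnA))
      have hrank : (univ.filter fun i' => te i ≤ te i').card ≤ K := by
        have hsplit : ((univ.filter fun i' => te i ≤ te i').filter fun i' => y i' = l).card
            + ((univ.filter fun i' => te i ≤ te i').filter fun i' => ¬ y i' = l).card
            = (univ.filter fun i' => te i ≤ te i').card :=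
          Finset.card_filter_add_card_filter_not _
        have hmK : m ≤ K :=
          le_trans (le_trans hAcount (Finset.card_le_card
            (Finset.filter_subset_filter _ (Finset.subset_univ A)))) hrank_i₀
        rw [← hsplit]
        omega
      refine mem_filter.mpr ⟨?_, hyi⟩
      unfold topK
      exact mem_filter.mpr ⟨mem_univ i, hrank⟩
    have hfinal : m ≤ ((topK s K e).filter fun i => y i = l).card := by
      rw [← hTecard]; exact Finset.card_le_card hTe_sub
    unfold predicts
    omega
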